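/- Let (α, T, N, B, κ, τ) be a spacelike Frenet curve (with spacelike principal normal) in E₁³ with κ and τ twice differentiable, and define the Darboux curve W(s) = τ(s)·T(s) − κ(s)·B(s). If there is a function μ : ℝ → ℝ with W''(s) = μ(s)·N(s) for all s, then κ'' ≡ 0 and τ'' ≡ 0, so there exist constants a, b, c, d ∈ ℝ with κ(s) = a·s + b and τ(s) = c·s + d for all s; that is, α is an Euler spiral in E₁³. -/

import Mathlib

/-- The Minkowski bilinear form on ℝ³: `⟨x,y⟩ = −x₀y₀ + x₁y₁ + x₂y₂`. -/
def mink (x y : Fin 3 → ℝ) : ℝ := -(x 0 * y 0) + x 1 * y 1 + x 2 * y 2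

lemma mink_expand (a b c : ℝ) (u v w t : Fin 3 → ℝ) :
    mink (a • u + b • v - c • w) t = a * mink u t + b * mink v t - c * mink w t := by
  simp [mink]; ring

lemma mink_smul (a : ℝ) (u t : Fin 3 → ℝ) : mink (a • u) t = a * mink u t := by
  simp [mink]; ring

lemma mink_comm (u t : Fin 3 → ℝ) : mink u t = mink t u := by
  simp [mink]; ring

lemma affine_of_deriv2 (f f' f'' : ℝ → ℝ) (hf : ∀ s, HasDerivAt f (f' s) s)
    (hf' : ∀ s, HasDerivAt f' (f'' s) s) (h0 : ∀ s, f'' s = 0) :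
    ∀ s, f s = f' 0 * s + f 0 := by
  have hc : ∀ s, f' s = f' 0 := by
    intro s
    exact is_const_of_deriv_eq_zero (fun x => (hf' x).differentiableAt)
      (fun x => by rw [(hf' x).deriv]; exact h0 x) s 0
  intro s
  have hg : ∀ x, HasDerivAt (fun x => f x - f' 0 * x) 0 x := by
    intro x
    have := (hf x).sub ((hasDerivAt_id x).const_mul (f' 0))
    exact this.congr_deriv (by rw [hc x]; ring)
  have := is_const_of_deriv_eq_zero (fun x => (hg x).differentiableAt)
    (fun x => (hg x).deriv) s 0
  simp at this
  linarith

theorem darboux_geodesic_implies_euler_spiral_spacelike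
    (α T N B : ℝ → Fin 3 → ℝ) (κ τ κ' τ' κ'' τ'' : ℝ → ℝ)
    (hα : ∀ s, HasDerivAt α (T s) s)
    (hT : ∀ s, HasDerivAt T (κ s • N s) s)
    (hN : ∀ s, HasDerivAt N (-κ s • T s + τ s • B s) s)
    (hB : ∀ s, HasDerivAt B (τ s • N s) s)
    (hTT : ∀ s, mink (T s) (T s) = 1)
    (hNN : ∀ s, mink (N s) (N s) = 1)
    (hBB : ∀ s, mink (B s) (B s) = -1)
    (hTN : ∀ s, mink (T s) (N s) = 0)
    (hTB : ∀ s, mink (T s) (B s) = 0)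
    (hNB : ∀ s, mink (N s) (B s) = 0)
    (hκ' : ∀ s, HasDerivAt κ (κ' s) s) (hτ' : ∀ s, HasDerivAt τ (τ' s) s)
    (hκ'' : ∀ s, HasDerivAt κ' (κ'' s) s) (hτ'' : ∀ s, HasDerivAt τ' (τ'' s) s)
    (W : ℝ → Fin 3 → ℝ) (hW : ∀ s : ℝ, W s = τ s • T s - κ s • B s)
    (μ : ℝ → ℝ) (hμ : ∀ s : ℝ, deriv (deriv W) s = μ s • N s) :
    (∀ s : ℝ, κ'' s = 0) ∧ (∀ s : ℝ, τ'' s = 0) ∧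
      ∃ a b c d : ℝ, ∀ s : ℝ, κ s = a * s + b ∧ τ s = c * s + d := by
  have hWfun : W = fun s => τ s • T s - κ s • B s := funext hW
  have hW1 : ∀ s, HasDerivAt W (τ' s • T s - κ' s • B s) s := by
    intro s
    rw [hWfun]
    have h := ((hτ' s).smul (hT s)).sub ((hκ' s).smul (hB s))
    have hcomm : τ s • κ s • N s = κ s • τ s • N s := by
      rw [smul_smul, smul_smul, mul_comm]
    refine h.congr_deriv ?_
    rw [hcomm]; abel
  have hdW : deriv W = fun s => τ' s • T s - κ' s • B s := funext fun s => (hW1 s).deriv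
  have hE : ∀ s, τ'' s • T s + (τ' s * κ s - κ' s * τ s) • N s - κ'' s • B s = μ s • N s := by
    intro s
    have h := ((hτ'' s).smul (hT s)).sub ((hκ'' s).smul (hB s))
    have veq : τ' s • κ s • N s + τ'' s • T s - (κ' s • τ s • N s + κ'' s • B s)
        = τ'' s • T s + (τ' s * κ s - κ' s * τ s) • N s - κ'' s • B s := by
      simp only [smul_smul, sub_smul]; abel
    have h2 : HasDerivAt (deriv W)
        (τ'' s • T s + (τ' s * κ s - κ' s * τ s) • N s - κ'' s • B s) s := by
      rw [hdW]; exact veq ▸ h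
    rw [← h2.deriv, hμ s]
  have hκ0 : ∀ s, κ'' s = 0 := by
    intro s
    have h := congrArg (fun v => mink v (B s)) (hE s)
    simp only [mink_expand, mink_smul] at h
    rw [hTB, hNB, hBB] at h
    linarith
  have hτ0 : ∀ s, τ'' s = 0 := by
    intro s
    have h := congrArg (fun v => mink v (T s)) (hE s)
    simp only [mink_expand, mink_smul] at h
    rw [hTT, mink_comm (N s), mink_comm (B s), hTN, hTB] at h
    linarith
  exact ⟨hκ0, hτ0, κ' 0, κ 0, τ' 0, τ 0, fun s =>
    ⟨affine_of_deriv2 κ κ' κ'' hκ' hκ'' hκ0 s, affine_of_deriv2 τ τ' τ'' hτ' hτ'' hτ0 s⟩⟩
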